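/- For every ε > 0 there exists M > 1 (depending only on ε and V) such that the following holds. Let V = E₀ ⊕ ⋯ ⊕ E_s be any direct-sum decomposition of V into nonzero subspaces with s ≥ 1, dim E₀ = 1 and κ(E₀,…,E_s) ≥ ε, let 1 ≤ i ≤ s, and let x̄, ȳ ∈ P(V) ∖ P(V⁰) and 0 < r < M^{-1} satisfy: ‖g(x̄)‖_∞ ≤ ε^{-1}, gᵏ(x̄) = gᵏ(ȳ) for all 0 ≤ k ≤ i−1, and d(P_{(Vⁱ)^⊥} x̄, P_{(Vⁱ)^⊥} ȳ) ≤ r (for i = s interpret P_{(Vⁱ)^⊥} as the identity). Then |gⁱ(x̄) − gⁱ(ȳ)| ≤ M r. -/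

import Mathlib

open scoped RealInnerProductSpace
open Filter

variable {V : Type*} [NormedAddCommGroup V] [InnerProductSpace ℝ V]

/-- The projective distance between the lines spanned by two nonzero vectors:
`d(x̄, ȳ) = (1 − ⟨x,y⟫²/(|x|²|y|²))^{1/2}`. -/
noncomputable def projDist (x y : V) : ℝ :=
  Real.sqrt (1 - ⟪x, y⟫ ^ 2 / (‖x‖ ^ 2 * ‖y‖ ^ 2))

/-- The distance `d(x̄, P(W))` from the line spanned by `x` to the projective space of the
submodule `W`. -/
noncomputable def projDistToSub (x : V) (W : Submodule ℝ V) : ℝ :=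
  sInf {r : ℝ | ∃ y : V, y ∈ W ∧ y ≠ 0 ∧ r = projDist x y}

/-- `κ(E₀,…,E_s)`: the minimal projective distance between nonzero vectors lying in sums of
disjoint subfamilies of the `E i`. -/
noncomputable def kappa {ι : Type*} (E : ι → Submodule ℝ V) : ℝ :=
  sInf {r : ℝ | ∃ (I J : Finset ι) (x y : V), I.Nonempty ∧ J.Nonempty ∧ Disjoint I J ∧
    x ∈ (⨆ i ∈ I, E i) ∧ x ≠ 0 ∧ y ∈ (⨆ j ∈ J, E j) ∧ y ≠ 0 ∧ r = projDist x y}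

/-- `Vⁱ = E_{i+1} ⊕ ⋯ ⊕ E_s`. -/
noncomputable def Vlow {s : ℕ} (E : Fin (s+1) → Submodule ℝ V) (i : ℕ) : Submodule ℝ V :=
  ⨆ j : Fin (s+1), ⨆ _ : i < (j : ℕ), E j

/-- `Wⁱ = E₀ ⊕ ⋯ ⊕ E_i`. -/
noncomputable def Whigh {s : ℕ} (E : Fin (s+1) → Submodule ℝ V) (i : ℕ) : Submodule ℝ V :=
  ⨆ j : Fin (s+1), ⨆ _ : (j : ℕ) ≤ i, E j

/-- `‖x ∧ y‖ = (|x|²|y|² − ⟨x,y⟫²)^{1/2}`, the area of the parallelogram spanned by `x, y`. -/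
noncomputable def wedgeNorm (x y : V) : ℝ :=
  Real.sqrt (‖x‖ ^ 2 * ‖y‖ ^ 2 - ⟪x, y⟫ ^ 2)


section AuxLemmas

lemma projDist_nonneg' (x y : V) : 0 ≤ projDist x y := Real.sqrt_nonneg _

lemma projDist_le_one' (x y : V) : projDist x y ≤ 1 := by
  have h : (1 : ℝ) - ⟪x, y⟫ ^ 2 / (‖x‖ ^ 2 * ‖y‖ ^ 2) ≤ 1 := by
    have : 0 ≤ ⟪x, y⟫ ^ 2 / (‖x‖ ^ 2 * ‖y‖ ^ 2) := by positivity
    linarith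
  calc projDist x y ≤ Real.sqrt 1 := Real.sqrt_le_sqrt h
  _ = 1 := Real.sqrt_one

lemma projDist_sq (x y : V) (hx : x ≠ 0) (hy : y ≠ 0) :
    projDist x y ^ 2 = 1 - ⟪x, y⟫ ^ 2 / (‖x‖ ^ 2 * ‖y‖ ^ 2) := by
  apply Real.sq_sqrt
  have hxn : (0:ℝ) < ‖x‖ := norm_pos_iff.2 hx
  have hyn : (0:ℝ) < ‖y‖ := norm_pos_iff.2 hy
  have hcs := real_inner_mul_inner_self_le x y
  rw [real_inner_self_eq_norm_sq, real_inner_self_eq_norm_sq] at hcs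
  have : ⟪x, y⟫ ^ 2 / (‖x‖ ^ 2 * ‖y‖ ^ 2) ≤ 1 := by
    rw [div_le_one (by positivity)]
    nlinarith [hcs]
  linarith

lemma projDist_smul (c d : ℝ) (hc : c ≠ 0) (hd : d ≠ 0) (x y : V) :
    projDist (c • x) (d • y) = projDist x y := by
  unfold projDist
  by_cases hx : x = 0
  · simp [hx]
  by_cases hy : y = 0
  · simp [hy]
  congr 1
  rw [real_inner_smul_left, real_inner_smul_right, norm_smul, norm_smul]
  have hxn : ‖x‖ ≠ 0 := norm_ne_zero_iff.2 hx
  have hyn : ‖y‖ ≠ 0 := norm_ne_zero_iff.2 hy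
  simp only [mul_pow, sq_abs]
  field_simp
  simp only [Real.norm_eq_abs, sq_abs]
  ring

lemma kappa_bddBelow {ι : Type*} (E : ι → Submodule ℝ V) :
    BddBelow {r : ℝ | ∃ (I J : Finset ι) (x y : V), I.Nonempty ∧ J.Nonempty ∧ Disjoint I J ∧
    x ∈ (⨆ i ∈ I, E i) ∧ x ≠ 0 ∧ y ∈ (⨆ j ∈ J, E j) ∧ y ≠ 0 ∧ r = projDist x y} := by
  refine ⟨0, fun r hr => ?_⟩
  obtain ⟨I, J, x, y, _, _, _, _, _, _, _, rfl⟩ := hr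
  exact projDist_nonneg' x y

lemma kappa_le {ι : Type*} (E : ι → Submodule ℝ V) {I J : Finset ι} {x y : V}
    (hI : I.Nonempty) (hJ : J.Nonempty) (hIJ : Disjoint I J)
    (hx : x ∈ ⨆ i ∈ I, E i) (hx0 : x ≠ 0) (hy : y ∈ ⨆ j ∈ J, E j) (hy0 : y ≠ 0) :
    kappa E ≤ projDist x y :=
  csInf_le (kappa_bddBelow E) ⟨I, J, x, y, hI, hJ, hIJ, hx, hx0, hy, hy0, rfl⟩

/-- Key separation estimate coming from a lower bound on `kappa`. -/
lemma sep {ι : Type*} {E : ι → Submodule ℝ V} {ε : ℝ} (hε : 0 < ε) (hε1 : ε ≤ 1)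
    (hκ : ε ≤ kappa E) {I J : Finset ι} (hI : I.Nonempty) (hJ : J.Nonempty)
    (hIJ : Disjoint I J) {u w : V} (hu : u ∈ ⨆ k ∈ I, E k) (hw : w ∈ ⨆ k ∈ J, E k) :
    ε * ‖u‖ ≤ ‖u + w‖ := by
  by_cases hu0 : u = 0
  · simp [hu0]
  by_cases hw0 : w = 0
  · simp only [hw0, add_zero]
    nlinarith [norm_nonneg u]
  have hd : ε ≤ projDist u w := hκ.trans (kappa_le E hI hJ hIJ hu hu0 hw hw0)
  have hsq := projDist_sq u w hu0 hw0
  have hun : (0:ℝ) < ‖u‖ := norm_pos_iff.2 hu0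
  have hwn : (0:ℝ) < ‖w‖ := norm_pos_iff.2 hw0
  have h1 : ε ^ 2 * ‖u‖ ^ 2 ≤ ‖u‖ ^ 2 - ⟪u, w⟫ ^ 2 / ‖w‖ ^ 2 := by
    have h2 : ε ^ 2 ≤ projDist u w ^ 2 := by nlinarith [projDist_nonneg' u w]
    rw [hsq] at h2
    have h3 : ε ^ 2 * ‖u‖ ^ 2 ≤ (1 - ⟪u, w⟫ ^ 2 / (‖u‖ ^ 2 * ‖w‖ ^ 2)) * ‖u‖ ^ 2 := by
      nlinarith
    calc ε ^ 2 * ‖u‖ ^ 2 ≤ (1 - ⟪u, w⟫ ^ 2 / (‖u‖ ^ 2 * ‖w‖ ^ 2)) * ‖u‖ ^ 2 := h3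
      _ = ‖u‖ ^ 2 - ⟪u, w⟫ ^ 2 / ‖w‖ ^ 2 := by field_simp
  have h4 : ‖u‖ ^ 2 - ⟪u, w⟫ ^ 2 / ‖w‖ ^ 2 ≤ ‖u + w‖ ^ 2 := by
    rw [norm_add_sq_real]
    have key : 0 ≤ (‖w‖ + ⟪u, w⟫ / ‖w‖) ^ 2 := sq_nonneg _
    have expand : (‖w‖ + ⟪u, w⟫ / ‖w‖) ^ 2 = ‖w‖ ^ 2 + 2 * ⟪u, w⟫ + ⟪u, w⟫ ^ 2 / ‖w‖ ^ 2 := by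
      field_simp; ring
    nlinarith
  have h5 : (ε * ‖u‖) ^ 2 ≤ ‖u + w‖ ^ 2 := by nlinarith
  nlinarith [norm_nonneg (u + w), mul_nonneg hε.le (norm_nonneg u)]

lemma memBiSup {ι : Type*} {E : ι → Submodule ℝ V} {I : Finset ι} {k : ι} (hk : k ∈ I)
    {z : V} (hz : z ∈ E k) : z ∈ ⨆ j ∈ I, E j :=
  Submodule.mem_iSup_of_mem k (Submodule.mem_iSup_of_mem hk hz)

lemma sepVlow {s : ℕ} {E : Fin (s+1) → Submodule ℝ V} {ε : ℝ} (hε : 0 < ε) (hε1 : ε ≤ 1)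
    (hκ : ε ≤ kappa E) {i : ℕ} {I : Finset (Fin (s+1))} (hI : I.Nonempty)
    (hIle : ∀ k ∈ I, (k : ℕ) ≤ i) {u w : V} (hu : u ∈ ⨆ k ∈ I, E k) (hw : w ∈ Vlow E i) :
    ε * ‖u‖ ≤ ‖u + w‖ := by
  by_cases his : i < s
  · set J : Finset (Fin (s+1)) := Finset.univ.filter (fun k => i < (k : ℕ)) with hJdef
    have hJne : J.Nonempty := ⟨⟨i+1, by omega⟩, by simp [hJdef]⟩
    have hdisj : Disjoint I J := by
      rw [Finset.disjoint_left]
      intro k hkI hkJ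
      have h1 := hIle k hkI
      have h2 : i < (k : ℕ) := by simpa [hJdef] using hkJ
      omega
    have hwJ : w ∈ ⨆ k ∈ J, E k := by
      apply (iSup_le fun j => iSup_le fun hj => ?_ : Vlow E i ≤ ⨆ k ∈ J, E k) hw
      exact le_iSup₂ (f := fun k (_ : k ∈ J) => E k) j (by simp [hJdef, hj])
    exact sep hε hε1 hκ hI hJne hdisj hu hwJ
  · have hbot : Vlow E i ≤ ⊥ := by
      apply iSup_le fun j => iSup_le fun hj => ?_
      exact absurd hj (by omega)
    have hw0 : w = 0 := hbot hw
    rw [hw0, add_zero]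
    nlinarith [norm_nonneg u]

end AuxLemmas

set_option maxHeartbeats 4000000 in
/-- Lemma 5.5 of the paper. For every `ε > 0` there is `M > 1` such that
for every splitting `V = E₀ ⊕ ⋯ ⊕ E_s` (with `dim E₀ = 1` and `κ ≥ ε`), every `1 ≤ i ≤ s`,
and all `x̄, ȳ ∈ P(V) ∖ P(V⁰)` with `‖g(x̄)‖_∞ ≤ ε⁻¹`, agreeing in `g⁰,…,g^{i−1}`, and with
`d(P_{(Vⁱ)^⊥}x̄, P_{(Vⁱ)^⊥}ȳ) ≤ r < M⁻¹`: `|gⁱ(x̄) − gⁱ(ȳ)| ≤ M r`. -/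
theorem stmt12 [FiniteDimensional ℝ V] (hdim : 2 ≤ Module.finrank ℝ V) :
    ∀ ε > (0 : ℝ), ∃ M : ℝ, 1 < M ∧
      ∀ (s : ℕ), 1 ≤ s → ∀ (E : Fin (s+1) → Submodule ℝ V),
        DirectSum.IsInternal E → (∀ k, E k ≠ ⊥) → Module.finrank ℝ (E 0) = 1 →
        ε ≤ kappa E →
        ∀ (L : Fin (s+1) → V →ₗ[ℝ] V), (∀ x : V, ∑ k, L k x = x) → (∀ k x, L k x ∈ E k) →
        ∀ u₀ : V, u₀ ∈ E 0 → ‖u₀‖ = 1 →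
        ∀ f₀ : V →ₗ[ℝ] ℝ, (∀ x, L 0 x = f₀ x • u₀) →
        ∀ (i : ℕ) (hi1 : 1 ≤ i) (hi2 : i ≤ s),
        ∀ x y : V, x ≠ 0 → y ≠ 0 → f₀ x ≠ 0 → f₀ y ≠ 0 →
        (Finset.univ.sup' Finset.univ_nonempty fun k => ‖(f₀ x)⁻¹ • L k x‖) ≤ ε⁻¹ →
        (∀ k : Fin (s+1), (k : ℕ) < i → (f₀ x)⁻¹ • L k x = (f₀ y)⁻¹ • L k y) →
        ∀ r : ℝ, 0 < r → r < M⁻¹ →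
        projDist (Submodule.orthogonalProjectionOnto (Vlow E i)ᗮ x : V)
            (Submodule.orthogonalProjectionOnto (Vlow E i)ᗮ y : V) ≤ r →
        ‖(f₀ x)⁻¹ • L ⟨i, by omega⟩ x - (f₀ y)⁻¹ • L ⟨i, by omega⟩ y‖ ≤ M * r := by
  intro ε hε
  set N : ℝ := (Module.finrank ℝ V : ℝ) with hNdef
  have hN0 : 0 ≤ N := by positivity
  set e : ℝ := ε⁻¹ with hedef
  have he0 : 0 < e := by positivity
  have hee : ε * e = 1 := mul_inv_cancel₀ (ne_of_gt hε)
  set B : ℝ := e * e * N + 1 with hBdef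
  have hB1 : 1 ≤ B := by nlinarith [mul_nonneg (mul_nonneg he0.le he0.le) hN0]
  set A : ℝ := N * e with hAdef
  have hA0 : 0 ≤ A := mul_nonneg hN0 he0.le
  set M : ℝ := e * (2 * N * B + 2 * A * B) + 2 with hMdef
  have hM2 : 2 ≤ M := by
    have h1 : 0 ≤ N * B := mul_nonneg hN0 (by linarith)
    have h2 : 0 ≤ A * B := mul_nonneg hA0 (by linarith)
    nlinarith [mul_nonneg he0.le h1, mul_nonneg he0.le h2]
  refine ⟨M, by linarith, ?_⟩
  intro s hs E hE hEne hE0rank hκ L hsum hLmem u₀ hu₀E hu₀n f₀ hf₀ i hi1 hi2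
    x y hx0 hy0 hfx hfy hsup hagree r hr hrM hPd
  have hu₀0 : u₀ ≠ 0 := by intro h; rw [h, norm_zero] at hu₀n; norm_num at hu₀n
  -- ε ≤ 1
  obtain ⟨z0, hz0E, hz00⟩ := Submodule.exists_mem_ne_zero_of_ne_bot (hEne 0)
  obtain ⟨z1, hz1E, hz10⟩ := Submodule.exists_mem_ne_zero_of_ne_bot (hEne ⟨1, by omega⟩)
  have hε1 : ε ≤ 1 := by
    have h01 : (0 : Fin (s+1)) ≠ ⟨1, by omega⟩ := by simp [Fin.ext_iff]
    have := kappa_le E (I := {0}) (J := {⟨1, by omega⟩}) ⟨0, Finset.mem_singleton_self 0⟩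
      ⟨_, Finset.mem_singleton_self _⟩ (Finset.disjoint_singleton.2 h01)
      (memBiSup (Finset.mem_singleton_self 0) hz0E) hz00
      (memBiSup (Finset.mem_singleton_self _) hz1E) hz10
    exact le_trans hκ (le_trans this (projDist_le_one' z0 z1))
  -- s + 1 ≤ N
  have hInd := hE.submodule_iSupIndep
  have hsn : (s : ℝ) + 1 ≤ N := by
    have hch : ∀ k : Fin (s+1), ∃ z, z ∈ E k ∧ z ≠ 0 := by
      intro k
      obtain ⟨z, h1, h2⟩ := Submodule.exists_mem_ne_zero_of_ne_bot (hEne k)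
      exact ⟨z, h1, h2⟩
    choose zz hzmem hzne using hch
    have hli : LinearIndependent ℝ zz := hInd.linearIndependent E hzmem hzne
    have := hli.fintype_card_le_finrank
    rw [Fintype.card_fin] at this
    rw [hNdef]
    exact_mod_cast this
  -- f₀ vanishes on E k for k ≠ 0
  have fzero : ∀ (k : Fin (s+1)), k ≠ 0 → ∀ z ∈ E k, f₀ z = 0 := by
    intro k hk z hz
    have hL0 : L 0 z = z - ∑ j ∈ Finset.univ.erase 0, L j z := by
      have h := Finset.add_sum_erase Finset.univ (fun j => L j z) (Finset.mem_univ 0)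
      rw [hsum z] at h
      linear_combination (norm := module) h
    have hmem2 : L 0 z ∈ ⨆ j, ⨆ _ : j ≠ 0, E j := by
      rw [hL0]
      apply sub_mem
      · exact Submodule.mem_iSup_of_mem k (Submodule.mem_iSup_of_mem hk hz)
      · apply Submodule.sum_mem
        intro j hj
        have hj0 : j ≠ 0 := (Finset.mem_erase.1 hj).1
        exact Submodule.mem_iSup_of_mem j (Submodule.mem_iSup_of_mem hj0 (hLmem j z))
    have h0 : L 0 z = 0 := Submodule.disjoint_def.1 (hInd 0) _ (hLmem 0 z) hmem2
    rw [hf₀ z] at h0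
    rcases smul_eq_zero.1 h0 with h | h
    · exact h
    · exact absurd h hu₀0
  have fVlow : ∀ z ∈ Vlow E i, f₀ z = 0 := by
    intro z hz
    have hle : Vlow E i ≤ LinearMap.ker f₀ := by
      apply iSup_le fun j => iSup_le fun hj => ?_
      intro w hw
      rw [LinearMap.mem_ker]
      exact fzero j (by rintro rfl; simp at hj) w hw
    exact hle hz
  -- projection facts
  set K : Submodule ℝ V := (Vlow E i)ᗮ with hKdef
  have hKoo : Kᗮ = Vlow E i := Submodule.orthogonal_orthogonal (Vlow E i)
  have Pzero : ∀ z ∈ Vlow E i, (Submodule.orthogonalProjectionOnto K z : V) = 0 := by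
    intro z hz
    have hzK : z ∈ Kᗮ := by rw [hKoo]; exact hz
    rw [Submodule.orthogonalProjectionOnto_apply_of_mem_orthogonal hzK]
    rfl
  have subP : ∀ z : V, z - (Submodule.orthogonalProjectionOnto K z : V) ∈ Vlow E i := by
    intro z
    have h := K.sub_starProjection_mem_orthogonal z
    rw [hKoo] at h
    exact h
  have normP : ∀ z : V, ‖(Submodule.orthogonalProjectionOnto K z : V)‖ ≤ ‖z‖ := by
    intro z
    calc ‖(Submodule.orthogonalProjectionOnto K z : V)‖ = ‖Submodule.orthogonalProjectionOnto K z‖ := rfl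
      _ ≤ ‖Submodule.orthogonalProjectionOnto K‖ * ‖z‖ := (Submodule.orthogonalProjectionOnto K).le_opNorm z
      _ ≤ 1 * ‖z‖ := by
          have := Submodule.orthogonalProjectionOnto_norm_le K
          nlinarith [norm_nonneg z]
      _ = ‖z‖ := one_mul _
  -- normalized vectors
  set x' : V := (f₀ x)⁻¹ • x with hx'def
  set y' : V := (f₀ y)⁻¹ • y with hy'def
  have hfx' : f₀ x' = 1 := by rw [hx'def, map_smul, smul_eq_mul, inv_mul_cancel₀ hfx]
  have hfy' : f₀ y' = 1 := by rw [hy'def, map_smul, smul_eq_mul, inv_mul_cancel₀ hfy]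
  have hLx' : ∀ k, L k x' = (f₀ x)⁻¹ • L k x := fun k => map_smul (L k) _ x
  have hLy' : ∀ k, L k y' = (f₀ y)⁻¹ • L k y := fun k => map_smul (L k) _ y
  have compB : ∀ k, ‖L k x'‖ ≤ e := by
    intro k
    rw [hLx' k, hedef]
    exact le_trans (Finset.le_sup' (fun k => ‖(f₀ x)⁻¹ • L k x‖) (Finset.mem_univ k)) hsup
  have hagree' : ∀ k : Fin (s+1), (k : ℕ) < i → L k x' = L k y' := by
    intro k hk
    rw [hLx' k, hLy' k]
    exact hagree k hk
  set iF : Fin (s+1) := ⟨i, by omega⟩ with hiFdef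
  set v : V := L iF x' - L iF y' with hvdef
  set a : V := (Submodule.orthogonalProjectionOnto K x' : V) with hadef
  set b : V := (Submodule.orthogonalProjectionOnto K y' : V) with hbdef
  -- high/low splits
  set p : Fin (s+1) → Prop := fun k => (k : ℕ) ≤ i with hpdef
  have hiFp : iF ∈ Finset.univ.filter p := by simp [hpdef, hiFdef]
  have h0p : (0 : Fin (s+1)) ∈ Finset.univ.filter p := by simp [hpdef] <;> omega
  set hX : V := ∑ k ∈ Finset.univ.filter p, L k x' with hhXdef
  set hY : V := ∑ k ∈ Finset.univ.filter p, L k y' with hhYdef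
  have hlowmem : ∀ z : V, ∑ k ∈ Finset.univ.filter (fun k => ¬ p k), L k z ∈ Vlow E i := by
    intro z
    apply Submodule.sum_mem
    intro k hk
    have hik : i < (k : ℕ) := by
      have := (Finset.mem_filter.1 hk).2
      rw [hpdef] at this; omega
    exact Submodule.mem_iSup_of_mem k (Submodule.mem_iSup_of_mem hik (hLmem k z))
  have hsplit : ∀ z : V, z - (∑ k ∈ Finset.univ.filter p, L k z) ∈ Vlow E i := by
    intro z
    have h := Finset.sum_filter_add_sum_filter_not Finset.univ p (fun k => L k z)
    rw [hsum z] at h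
    have heq : z - (∑ k ∈ Finset.univ.filter p, L k z)
        = ∑ k ∈ Finset.univ.filter (fun k => ¬ p k), L k z := by
      linear_combination (norm := module) (-1 : ℝ) • h
    rw [heq]
    exact hlowmem z
  have hXmem : hX ∈ ⨆ k ∈ Finset.univ.filter p, E k :=
    Submodule.sum_mem _ fun k hk => memBiSup hk (hLmem k x')
  have hYmem : hY ∈ ⨆ k ∈ Finset.univ.filter p, E k :=
    Submodule.sum_mem _ fun k hk => memBiSup hk (hLmem k y')
  have hIle : ∀ k ∈ Finset.univ.filter p, (k : ℕ) ≤ i := fun k hk => (Finset.mem_filter.1 hk).2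
  have haX : a - hX ∈ Vlow E i := by
    have h1 := subP x'
    have h2 := hsplit x'
    have h3 : a - hX = -(x' - a) + (x' - hX) := by abel
    rw [h3]
    exact add_mem (neg_mem h1) h2
  have hbY : b - hY ∈ Vlow E i := by
    have h1 := subP y'
    have h2 := hsplit y'
    have h3 : b - hY = -(y' - b) + (y' - hY) := by abel
    rw [h3]
    exact add_mem (neg_mem h1) h2
  have hL0x' : ‖L 0 x'‖ = 1 := by rw [hf₀ x', hfx', one_smul, hu₀n]
  have hL0y' : ‖L 0 y'‖ = 1 := by rw [hf₀ y', hfy', one_smul, hu₀n]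
  have hJne : ((Finset.univ.filter p).erase 0).Nonempty := by
    refine ⟨⟨1, by omega⟩, Finset.mem_erase.2 ⟨by simp [Fin.ext_iff], ?_⟩⟩
    simp [hpdef] <;> omega
  have hXlb : ∀ (z : V), ‖L 0 z‖ = 1 →
      ε ≤ ‖∑ k ∈ Finset.univ.filter p, L k z‖ := by
    intro z hz1
    have hsplit2 : ∑ k ∈ Finset.univ.filter p, L k z
        = L 0 z + ∑ k ∈ (Finset.univ.filter p).erase 0, L k z :=
      (Finset.add_sum_erase _ (fun k => L k z) h0p).symm
    have hmemJ : ∑ k ∈ (Finset.univ.filter p).erase 0, L k z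
        ∈ ⨆ k ∈ (Finset.univ.filter p).erase 0, E k :=
      Submodule.sum_mem _ fun k hk => memBiSup hk (hLmem k z)
    have hs2 := sep (E := E) hε hε1 hκ ⟨0, Finset.mem_singleton_self 0⟩ hJne
      (Finset.disjoint_singleton_left.2 (fun h => (Finset.mem_erase.1 h).1 rfl))
      (memBiSup (Finset.mem_singleton_self 0) (hLmem 0 z)) hmemJ
    rw [hz1, mul_one] at hs2
    rw [hsplit2]
    exact hs2
  have hProjLb : ∀ (z w : V), w - z ∈ Vlow E i → (z ∈ ⨆ k ∈ Finset.univ.filter p, E k) →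
      ε * ‖z‖ ≤ ‖w‖ := by
    intro z w hwz hzmem
    have hs3 := sepVlow hε hε1 hκ ⟨0, h0p⟩ hIle hzmem hwz
    have h4 : z + (w - z) = w := by abel
    rwa [h4] at hs3
  have halb : ε * ε ≤ ‖a‖ := by
    have h1 := hProjLb hX a haX hXmem
    have h2 := hXlb x' hL0x'
    nlinarith
  have hblb : ε * ε ≤ ‖b‖ := by
    have h1 := hProjLb hY b hbY hYmem
    have h2 := hXlb y' hL0y'
    nlinarith
  have ha0 : a ≠ 0 := by
    intro h; rw [h, norm_zero] at halb; nlinarith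
  have hb0 : b ≠ 0 := by
    intro h; rw [h, norm_zero] at hblb; nlinarith
  have han : (0:ℝ) < ‖a‖ := norm_pos_iff.2 ha0
  have hbn : (0:ℝ) < ‖b‖ := norm_pos_iff.2 hb0
  -- upper bounds
  have haub : ‖a‖ ≤ A := by
    have h1 : ‖x'‖ ≤ A := by
      calc ‖x'‖ = ‖∑ k, L k x'‖ := by rw [hsum x']
        _ ≤ ∑ k, ‖L k x'‖ := norm_sum_le _ _
        _ ≤ ∑ _k : Fin (s+1), e := Finset.sum_le_sum fun k _ => compB k
        _ = ((s+1 : ℕ) : ℝ) * e := by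
              rw [Finset.sum_const, Finset.card_univ, Fintype.card_fin, nsmul_eq_mul]
        _ ≤ A := by
              have hc : ((s+1:ℕ):ℝ) = (s:ℝ) + 1 := by push_cast; ring
              rw [hc, hAdef]; nlinarith
    exact le_trans (normP x') h1
  have hvne : ∀ k ∈ Finset.univ.filter p, ‖L k y'‖ ≤ e + ‖v‖ := by
    intro k hk
    rcases lt_or_eq_of_le (hIle k hk) with h | h
    · rw [← hagree' k h]
      have := compB k
      nlinarith [norm_nonneg v]
    · have hkiF : k = iF := by rw [hiFdef]; exact Fin.ext h
      rw [hkiF]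
      have h5 : L iF y' = L iF x' - v := by rw [hvdef]; abel
      rw [h5]
      calc ‖L iF x' - v‖ ≤ ‖L iF x'‖ + ‖v‖ := norm_sub_le _ _
        _ ≤ e + ‖v‖ := by have := compB iF; linarith
  have hbub : ‖b‖ ≤ N * (e + ‖v‖) := by
    have hYb : ‖hY‖ ≤ N * (e + ‖v‖) := by
      calc ‖hY‖ ≤ ∑ k ∈ Finset.univ.filter p, ‖L k y'‖ := norm_sum_le _ _
        _ ≤ ∑ _k ∈ Finset.univ.filter p, (e + ‖v‖) := Finset.sum_le_sum hvne
        _ = ((Finset.univ.filter p).card : ℝ) * (e + ‖v‖) := by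
              rw [Finset.sum_const, nsmul_eq_mul]
        _ ≤ N * (e + ‖v‖) := by
              have hcard : (Finset.univ.filter p).card ≤ s + 1 := by
                calc (Finset.univ.filter p).card ≤ Finset.univ.card :=
                      Finset.card_filter_le _ _
                  _ = s + 1 := by rw [Finset.card_univ, Fintype.card_fin]
              have h1 : ((Finset.univ.filter p).card : ℝ) ≤ (s:ℝ)+1 := by exact_mod_cast hcard
              nlinarith [norm_nonneg v, he0.le]
    have hbhY : b = (Submodule.orthogonalProjectionOnto K hY : V) := by
      have h1 : y' - hY ∈ Vlow E i := hsplit y'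
      have h2 : (Submodule.orthogonalProjectionOnto K (y' - hY) : V) = 0 := Pzero _ h1
      rw [map_sub, Submodule.coe_sub] at h2
      rw [hbdef]
      have := sub_eq_zero.1 h2
      exact this
    rw [hbhY]
    exact le_trans (normP hY) hYb
  -- P v = a - b
  have hPveq : (Submodule.orthogonalProjectionOnto K v : V) = a - b := by
    have hsum_eq : ∑ k ∈ Finset.univ.filter p, (L k x' - L k y') = v := by
      apply Finset.sum_eq_single_of_mem iF hiFp
      intro k hk hne
      have hklt : (k : ℕ) < i := by
        have h1 := hIle k hk
        have h2 : (k:ℕ) ≠ i := fun h => hne (by rw [hiFdef]; exact Fin.ext h)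
        omega
      rw [hagree' k hklt]; simp
    have hfil := Finset.sum_filter_add_sum_filter_not Finset.univ p
      (fun k => L k x' - L k y')
    have htot : ∑ k, (L k x' - L k y') = x' - y' := by
      rw [Finset.sum_sub_distrib, hsum x', hsum y']
    rw [htot] at hfil
    have hmemlow : ∑ k ∈ Finset.univ.filter (fun k => ¬ p k), (L k x' - L k y')
        ∈ Vlow E i := by
      apply Submodule.sum_mem
      intro k hk
      have hik : i < (k : ℕ) := by
        have := (Finset.mem_filter.1 hk).2
        rw [hpdef] at this; omega
      exact Submodule.mem_iSup_of_mem k (Submodule.mem_iSup_of_mem hik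
        (sub_mem (hLmem k x') (hLmem k y')))
    have hd : (x' - y') - v ∈ Vlow E i := by
      have heq2 : (x' - y') - v
          = ∑ k ∈ Finset.univ.filter (fun k => ¬ p k), (L k x' - L k y') := by
        linear_combination (norm := module) (-1 : ℝ) • hfil + hsum_eq
      rw [heq2]
      exact hmemlow
    have h5 : (Submodule.orthogonalProjectionOnto K ((x' - y') - v) : V) = 0 := Pzero _ hd
    rw [map_sub, map_sub, Submodule.coe_sub, Submodule.coe_sub] at h5
    have := sub_eq_zero.1 h5
    rw [hadef, hbdef]
    exact this.symm
  -- f₀ values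
  have hfa : f₀ a = 1 := by
    have h1 : f₀ (x' - a) = 0 := fVlow _ (subP x')
    rw [map_sub, hfx'] at h1
    linarith
  have hfb : f₀ b = 1 := by
    have h1 : f₀ (y' - b) = 0 := fVlow _ (subP y')
    rw [map_sub, hfy'] at h1
    linarith
  -- projDist a b ≤ r
  have hab : projDist a b ≤ r := by
    have hxe : x = f₀ x • x' := by
      rw [hx'def, smul_smul, mul_inv_cancel₀ hfx, one_smul]
    have hye : y = f₀ y • y' := by
      rw [hy'def, smul_smul, mul_inv_cancel₀ hfy, one_smul]
    have h6 : (Submodule.orthogonalProjectionOnto K x : V) = f₀ x • a := by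
      rw [hadef]
      conv_lhs => rw [hxe]
      rw [map_smul, Submodule.coe_smul]
    have h7 : (Submodule.orthogonalProjectionOnto K y : V) = f₀ y • b := by
      rw [hbdef]
      conv_lhs => rw [hye]
      rw [map_smul, Submodule.coe_smul]
    rw [h6, h7, projDist_smul _ _ hfx hfy] at hPd
    exact hPd
  -- the key estimate
  set t : ℝ := ⟪a, b⟫ / ‖a‖^2 with htdef
  have hbta : ‖b - t • a‖ ≤ ‖b‖ * r := by
    have hsq1 : ‖b - t • a‖^2 = ‖b‖^2 - ⟪a, b⟫^2 / ‖a‖^2 := by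
      have hc : ⟪b, a⟫ = ⟪a, b⟫ := real_inner_comm a b
      rw [norm_sub_sq_real, real_inner_smul_right, norm_smul, Real.norm_eq_abs,
        mul_pow, sq_abs, hc, htdef]
      field_simp
      ring
    have hsq2 : ‖b‖^2 - ⟪a, b⟫^2 / ‖a‖^2 = ‖b‖^2 * projDist a b ^2 := by
      rw [projDist_sq a b ha0 hb0]
      field_simp
    have h8 : ‖b - t • a‖^2 ≤ (‖b‖ * r)^2 := by
      rw [hsq1, hsq2, mul_pow]
      have hd2 : projDist a b ^ 2 ≤ r ^ 2 := pow_le_pow_left₀ (projDist_nonneg' a b) hab 2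
      exact mul_le_mul_of_nonneg_left hd2 (sq_nonneg _)
    exact (pow_le_pow_iff_left₀ (norm_nonneg _) (mul_nonneg hbn.le hr.le) two_ne_zero).1 h8
  have hfbd : ∀ z : V, |f₀ z| ≤ e * ‖z‖ := by
    intro z
    have hnz : ‖L 0 z‖ = |f₀ z| := by
      rw [hf₀ z, norm_smul, hu₀n, mul_one, Real.norm_eq_abs]
    have hz2 : z - L 0 z = ∑ j ∈ Finset.univ.erase 0, L j z := by
      have h := Finset.add_sum_erase Finset.univ (fun j => L j z) (Finset.mem_univ 0)
      rw [hsum z] at h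
      linear_combination (norm := module) (-1 : ℝ) • h
    have hmemJ : z - L 0 z ∈ ⨆ k ∈ Finset.univ.erase (0 : Fin (s+1)), E k := by
      rw [hz2]
      exact Submodule.sum_mem _ fun k hk => memBiSup hk (hLmem k z)
    have hJne2 : (Finset.univ.erase (0 : Fin (s+1))).Nonempty :=
      ⟨⟨1, by omega⟩, Finset.mem_erase.2 ⟨by simp [Fin.ext_iff], Finset.mem_univ _⟩⟩
    have hs4 := sep (E := E) hε hε1 hκ ⟨0, Finset.mem_singleton_self 0⟩ hJne2
      (Finset.disjoint_singleton_left.2 (fun h => (Finset.mem_erase.1 h).1 rfl))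
      (memBiSup (Finset.mem_singleton_self 0) (hLmem 0 z)) hmemJ
    have h9 : L 0 z + (z - L 0 z) = z := by abel
    rw [h9, hnz] at hs4
    have h10 : e * (ε * |f₀ z|) ≤ e * ‖z‖ := mul_le_mul_of_nonneg_left hs4 he0.le
    have h11 : e * (ε * |f₀ z|) = |f₀ z| := by rw [← mul_assoc, mul_comm e ε, hee, one_mul]
    linarith
  have htau : |1 - t| ≤ e * (‖b‖ * r) := by
    have hft : f₀ (b - t • a) = 1 - t := by
      rw [map_sub, map_smul, hfa, hfb, smul_eq_mul, mul_one]
    calc |1 - t| = |f₀ (b - t • a)| := by rw [hft]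
      _ ≤ e * ‖b - t • a‖ := hfbd _
      _ ≤ e * (‖b‖ * r) := mul_le_mul_of_nonneg_left hbta he0.le
  have hab2 : ‖a - b‖ ≤ |1 - t| * ‖a‖ + ‖b - t • a‖ := by
    have h10 : a - b = (1 - t) • a - (b - t • a) := by module
    rw [h10]
    calc ‖(1 - t) • a - (b - t • a)‖ ≤ ‖(1 - t) • a‖ + ‖b - t • a‖ := norm_sub_le _ _
      _ = |1 - t| * ‖a‖ + ‖b - t • a‖ := by rw [norm_smul, Real.norm_eq_abs]
  have hvlb : ε * ‖v‖ ≤ ‖a - b‖ := by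
    have hvmem : v ∈ ⨆ k ∈ ({iF} : Finset (Fin (s+1))), E k :=
      memBiSup (Finset.mem_singleton_self iF) (sub_mem (hLmem iF x') (hLmem iF y'))
    have hwmem : (a - b) - v ∈ Vlow E i := by
      rw [← hPveq]
      have h11 : (Submodule.orthogonalProjectionOnto K v : V) - v = -(v - (Submodule.orthogonalProjectionOnto K v : V)) := by
        abel
      rw [h11]
      exact neg_mem (subP v)
    have hs5 := sepVlow hε hε1 hκ ⟨iF, Finset.mem_singleton_self iF⟩
      (fun k hk => by rw [Finset.mem_singleton.1 hk, hiFdef]) hvmem hwmem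
    have h12 : v + ((a - b) - v) = a - b := by abel
    rwa [h12] at hs5
  -- final numeric computation
  clear_value v t N e B A M
  have hB0 : (0:ℝ) ≤ B := by linarith
  have hAB0 : (0:ℝ) ≤ A * B := mul_nonneg hA0 hB0
  have hNB0 : (0:ℝ) ≤ N * B := mul_nonneg hN0 hB0
  have main : ε * ‖v‖ ≤ r * A * B + r * (N * B) * ‖v‖ := by
    have s1 : ‖a - b‖ ≤ e * (‖b‖ * r) * ‖a‖ + ‖b‖ * r :=
      le_trans hab2 (by linarith [mul_le_mul_of_nonneg_right htau (norm_nonneg a), hbta])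
    have s2 : e * (‖b‖ * r) * ‖a‖ + ‖b‖ * r ≤ r * ‖b‖ * (e * A + 1) := by
      linarith [mul_le_mul_of_nonneg_left haub (mul_nonneg (mul_nonneg he0.le hr.le) hbn.le)]
    have s3 : r * ‖b‖ * (e * A + 1) ≤ r * (N * (e + ‖v‖)) * (e * A + 1) := by
      have hpos : (0:ℝ) ≤ e * A + 1 := by linarith [mul_nonneg he0.le hA0]
      linarith [mul_le_mul_of_nonneg_left hbub (mul_nonneg hr.le hpos)]
    have s4 : r * (N * (e + ‖v‖)) * (e * A + 1) = r * A * B + r * (N * B) * ‖v‖ := by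
      rw [hAdef, hBdef]; ring
    linarith [hvlb, s1, s2, s3]
  have hMr : M * r < 1 := by
    have hMpos : (0:ℝ) < M := by linarith
    have := mul_lt_mul_of_pos_left hrM hMpos
    rwa [mul_inv_cancel₀ (ne_of_gt hMpos)] at this
  have hstep : r * (N * B) * ‖v‖ ≤ (ε/2) * ‖v‖ := by
    have h13 : 2 * e * (N * B) ≤ M := by
      rw [hMdef]; linarith [mul_nonneg he0.le hAB0]
    have h15 : 2 * e * (N * B) * r ≤ M * r := mul_le_mul_of_nonneg_right h13 hr.le
    have h16 : 2 * e * (N * B) * r < 1 := lt_of_le_of_lt h15 hMr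
    have h17 : r * (N * B) ≤ ε / 2 := by
      have h17a := mul_lt_mul_of_pos_left h16 (half_pos hε)
      have h17b : ε / 2 * (2 * e * (N * B) * r) = (ε * e) * (N * B * r) := by ring
      rw [h17b, hee, one_mul, mul_one] at h17a
      linarith
    have := mul_le_mul_of_nonneg_right h17 (norm_nonneg v)
    linarith
  have hvfin : ‖v‖ ≤ M * r := by
    have h18 : (ε/2) * ‖v‖ ≤ r * A * B := by linarith only [main, hstep]
    have h19 : ‖v‖ ≤ 2 * e * A * B * r := by
      have h19a := mul_le_mul_of_nonneg_left h18 (by linarith : (0:ℝ) ≤ 2 * e)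
      have h19b : 2 * e * (ε / 2 * ‖v‖) = (ε * e) * ‖v‖ := by ring
      rw [h19b, hee, one_mul] at h19a
      linarith
    have h20 : 2 * e * A * B ≤ M := by
      rw [hMdef]; linarith [mul_nonneg he0.le hNB0]
    linarith [mul_le_mul_of_nonneg_right h20 hr.le]
  have goal_eq : (f₀ x)⁻¹ • L ⟨i, by omega⟩ x - (f₀ y)⁻¹ • L ⟨i, by omega⟩ y = v := by
    rw [hvdef, hLx' iF, hLy' iF]
  rw [goal_eq]
  exact hvfin
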